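/- Let 𝔹_p * 𝔹_q * 𝔹_r * M be presented with generators p, p̄, q, q̄, r, r̄ and the generators of M, with relations p p̄ = 1, q q̄ = 1, r r̄ = 1, and the relations of M. Suppose there are words u, v over the generators of M with [uv] = 1 and [u] ≠ 1. Then for any words f, g over {r, r̄} ∪ X (X the generators of M), the elements [f r v r̄ g] and [f r u r̄ g] are not equal to 1. -/

import Mathlib

open FreeMonoid

variable {X : Type}

/-- Generators of `𝔹_p ∗ 𝔹_q ∗ 𝔹_r ∗ M`: the letters `s, s̄` for `s ∈ {p,q,r}`
(encoded as `Sum.inl (i, b)` with `i = 0, 1, 2` for `p, q, r` and `b = true`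
for `s`, `b = false` for `s̄`) together with the generators `X` of `M`. -/
abbrev Gen3 (X : Type) := (Fin 3 × Bool) ⊕ X

/-- The relations of `𝔹_p ∗ 𝔹_q ∗ 𝔹_r ∗ M`: `s s̄ = 1` for `s ∈ {p, q, r}`,
together with the relations `R` of `M` (on words over `X`). -/
def prodRel (R : FreeMonoid X → FreeMonoid X → Prop) :
    FreeMonoid (Gen3 X) → FreeMonoid (Gen3 X) → Prop := fun w₁ w₂ =>
  (∃ s : Fin 3, w₁ = of (Sum.inl (s, true)) * of (Sum.inl (s, false)) ∧ w₂ = 1) ∨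
  (∃ x y : FreeMonoid X, R x y ∧
    w₁ = FreeMonoid.map (Sum.inr : X → Gen3 X) x ∧
    w₂ = FreeMonoid.map (Sum.inr : X → Gen3 X) y)

/-- Embedding of words over the generators of `M` into words over all generators. -/
def embM : FreeMonoid X →* FreeMonoid (Gen3 X) :=
  FreeMonoid.map Sum.inr

/-- Embedding of words over `{r, r̄} ∪ X` (encoded as `Bool ⊕ X`, `true ↦ r`,
`false ↦ r̄`) into words over all generators. -/
def embRX : FreeMonoid (Bool ⊕ X) →* FreeMonoid (Gen3 X) :=
  FreeMonoid.map (Sum.elim (fun b => Sum.inl ((2 : Fin 3), b)) Sum.inr)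

section Proof

open MulOpposite

variable (R : FreeMonoid X → FreeMonoid X → Prop)

/-- The quotient monoid `M` presented by `(X, R)`. -/
abbrev Mq := (conGen R).Quotient

/-- Projection to `M`. -/
def piR : FreeMonoid X →* Mq R := (conGen R).mk'

/-- Nontrivial bicyclic syllables `r̄^a r^b`, `(a,b) ≠ (0,0)`:
`inl k ↦ (k+1, 0)`, `inr (a, k) ↦ (a, k+1)`. -/
abbrev Bsyl := ℕ ⊕ (ℕ × ℕ)

/-- States: a current `M`-part and a stack of (bicyclic syllable, `M`-part) pairs. -/
abbrev St := Mq R × List (Bsyl × Mq R)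

open Classical in
/-- Right multiplication by `r`. -/
noncomputable def actR (s : St R) : St R :=
  if s.1 = 1 then
    match s.2 with
    | [] => (1, [(Sum.inr (0, 0), 1)])
    | (Sum.inl k, m') :: L => (1, (Sum.inr (k + 1, 0), m') :: L)
    | (Sum.inr (a, k), m') :: L => (1, (Sum.inr (a, k + 1), m') :: L)
  else (1, (Sum.inr (0, 0), s.1) :: s.2)

open Classical in
/-- Right multiplication by `r̄`. -/
noncomputable def actRb (s : St R) : St R :=
  if s.1 = 1 then
    match s.2 with
    | [] => (1, [(Sum.inl 0, 1)])
    | (Sum.inl k, m') :: L => (1, (Sum.inl (k + 1), m') :: L)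
    | (Sum.inr (a, k + 1), m') :: L => (1, (Sum.inr (a, k), m') :: L)
    | (Sum.inr (0, 0), m') :: L => (m', L)
    | (Sum.inr (a + 1, 0), m') :: L => (1, (Sum.inl a, m') :: L)
  else (1, (Sum.inl 0, s.1) :: s.2)

lemma actRb_actR (s : St R) : actRb R (actR R s) = s := by
  obtain ⟨m, L⟩ := s
  by_cases hm : m = 1
  · subst hm
    rcases L with _ | ⟨⟨b, m'⟩, L⟩
    · simp [actR, actRb]
    · rcases b with k | ⟨a, k⟩ <;> simp [actR, actRb]
  · simp [actR, actRb, hm]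

/-- Action of a generator. -/
noncomputable def actGen : Gen3 X → St R → St R
  | Sum.inr x => fun s => (s.1 * piR R (of x), s.2)
  | Sum.inl (i, b) => if i = (2 : Fin 3) then (if b then actR R else actRb R) else id

/-- The representation of the free monoid on all generators by state transformations,
reading words left to right. -/
noncomputable def phi : FreeMonoid (Gen3 X) →* (Function.End (St R))ᵐᵒᵖ :=
  FreeMonoid.lift fun c => op (actGen R c)

lemma phi_mul_apply (w₁ w₂ : FreeMonoid (Gen3 X)) (s : St R) :
    (phi R (w₁ * w₂)).unop s = (phi R w₂).unop ((phi R w₁).unop s) := by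
  rw [map_mul, unop_mul]
  rfl

lemma phi_of (c : Gen3 X) : (phi R (of c)).unop = actGen R c := rfl

lemma phi_embM (x : FreeMonoid X) (s : St R) :
    (phi R (embM x)).unop s = (s.1 * piR R x, s.2) := by
  induction x using FreeMonoid.recOn generalizing s with
  | one =>
      simp only [map_one, mul_one]
      rfl
  | of_mul a y ih =>
      rw [embM] at ih ⊢
      rw [map_mul, phi_mul_apply, ih]
      simp [phi_of, actGen, FreeMonoid.map_of, mul_assoc]

lemma conGen_le_ker : conGen (prodRel R) ≤ Con.ker (phi R) := by
  apply Con.conGen_le.mpr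
  rintro x y (⟨i, rfl, rfl⟩ | ⟨x', y', hR, rfl, rfl⟩)
  · rw [Con.ker_rel, map_mul, map_one]
    apply unop_injective
    funext s
    show actGen R (Sum.inl (i, false)) (actGen R (Sum.inl (i, true)) s) = s
    by_cases hi : i = (2 : Fin 3)
    · subst hi
      simp only [actGen, if_pos rfl, if_pos, Bool.false_eq_true, if_neg]
      exact actRb_actR R s
    · simp [actGen, hi]
  · rw [Con.ker_rel]
    have hpi : piR R x' = piR R y' := by
      apply Con.eq _ |>.mpr
      exact ConGen.Rel.of _ _ hR
    have h1 : (phi R (embM x')).unop = (phi R (embM y')).unop := by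
      funext s
      rw [phi_embM, phi_embM, hpi]
    show phi R (embM x') = phi R (embM y')
    exact MulOpposite.unop_injective h1

/-- The protected-entry invariant. -/
def Bar : Bsyl → Prop
  | Sum.inl _ => True
  | Sum.inr (a, _) => 0 < a

def StInv (s : St R) : Prop := ∃ e ∈ s.2, Bar e.1

lemma inv_actR {s : St R} (h : StInv R s) : StInv R (actR R s) := by
  obtain ⟨m, L⟩ := s
  obtain ⟨e, he, hbar⟩ := h
  by_cases hm : m = 1
  · subst hm
    rcases L with _ | ⟨⟨b, m'⟩, L⟩
    · simp at he
    · rcases b with k | ⟨a, k⟩ <;> (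
        simp only [actR, if_pos rfl, StInv]
        rcases List.mem_cons.mp he with rfl | he')
      · exact ⟨(Sum.inr (k + 1, 0), m'), List.mem_cons_self, Nat.succ_pos _⟩
      · exact ⟨e, List.mem_cons_of_mem _ he', hbar⟩
      · exact ⟨(Sum.inr (a, k + 1), m'), List.mem_cons_self, hbar⟩
      · exact ⟨e, List.mem_cons_of_mem _ he', hbar⟩
  · simp only [actR, if_neg hm, StInv]
    exact ⟨e, List.mem_cons_of_mem _ he, hbar⟩

lemma inv_actRb {s : St R} (h : StInv R s) : StInv R (actRb R s) := by
  obtain ⟨m, L⟩ := s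
  obtain ⟨e, he, hbar⟩ := h
  by_cases hm : m = 1
  · subst hm
    rcases L with _ | ⟨⟨b, m'⟩, L⟩
    · simp at he
    · rcases b with k | ⟨a, k⟩
      · simp only [actRb, if_pos rfl, StInv]
        rcases List.mem_cons.mp he with rfl | he'
        · exact ⟨(Sum.inl (k + 1), m'), List.mem_cons_self, trivial⟩
        · exact ⟨e, List.mem_cons_of_mem _ he', hbar⟩
      · rcases k with _ | k
        · rcases a with _ | a
          · rcases List.mem_cons.mp he with rfl | he'
            · exact absurd hbar (by simp [Bar])
            · simp only [actRb, if_pos rfl, StInv]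
              exact ⟨e, he', hbar⟩
          · simp only [actRb, if_pos rfl, StInv]
            rcases List.mem_cons.mp he with rfl | he'
            · exact ⟨(Sum.inl a, m'), List.mem_cons_self, trivial⟩
            · exact ⟨e, List.mem_cons_of_mem _ he', hbar⟩
        · simp only [actRb, if_pos rfl, StInv]
          rcases List.mem_cons.mp he with rfl | he'
          · exact ⟨(Sum.inr (a, k), m'), List.mem_cons_self, hbar⟩
          · exact ⟨e, List.mem_cons_of_mem _ he', hbar⟩
  · simp only [actRb, if_neg hm, StInv]
    exact ⟨e, List.mem_cons_of_mem _ he, hbar⟩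

lemma inv_actGen (c : Gen3 X) {s : St R} (h : StInv R s) : StInv R (actGen R c s) := by
  match c with
  | Sum.inr x => exact h
  | Sum.inl (i, b) =>
      by_cases hi : i = (2 : Fin 3)
      · subst hi
        cases b
        · simpa [actGen] using inv_actRb R h
        · simpa [actGen] using inv_actR R h
      · simpa [actGen, hi] using h

lemma inv_word (w : FreeMonoid (Gen3 X)) {s : St R} (h : StInv R s) :
    StInv R ((phi R w).unop s) := by
  induction w using FreeMonoid.recOn generalizing s with
  | one => exact h
  | of_mul c w ih =>
      rw [phi_mul_apply]
      exact ih (by rw [phi_of]; exact inv_actGen R c h)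

lemma actR_shape (s : St R) :
    ∃ ab m' L, actR R s = (1, (Sum.inr ab, m') :: L) := by
  obtain ⟨m, L⟩ := s
  by_cases hm : m = 1
  · subst hm
    rcases L with _ | ⟨⟨b, m'⟩, L⟩
    · exact ⟨(0, 0), 1, [], by simp [actR]⟩
    · rcases b with k | ⟨a, k⟩
      · exact ⟨(k + 1, 0), m', L, by simp [actR]⟩
      · exact ⟨(a, k + 1), m', L, by simp [actR]⟩
  · exact ⟨(0, 0), m, L, by simp [actR, hm]⟩

/-- Key lemma: if `[w] ≠ 1` in `M`, then `[f r w r̄ g] ≠ 1`. -/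
lemma key (w : FreeMonoid X) (hw : piR R w ≠ 1) (f g : FreeMonoid (Bool ⊕ X)) :
    ¬ conGen (prodRel R)
        (embRX f * of (Sum.inl ((2 : Fin 3), true)) * embM w *
          of (Sum.inl ((2 : Fin 3), false)) * embRX g) 1 := by
  intro h
  have hker := conGen_le_ker R h
  rw [Con.ker_rel, map_one] at hker
  have happ : (phi R (embRX f * of (Sum.inl ((2 : Fin 3), true)) * embM w *
      of (Sum.inl ((2 : Fin 3), false)) * embRX g)).unop ((1 : Mq R), []) = ((1 : Mq R), []) := by
    rw [hker]; rfl
  rw [phi_mul_apply, phi_mul_apply, phi_mul_apply, phi_mul_apply] at happ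
  set s₁ : St R := (phi R (embRX f)).unop ((1 : Mq R), []) with hs₁
  obtain ⟨ab, m', L, hshape⟩ := actR_shape R s₁
  simp only [phi_of] at happ
  have h2 : actGen R (Sum.inl ((2 : Fin 3), true)) s₁ = (1, (Sum.inr ab, m') :: L) := by
    simpa [actGen] using hshape
  rw [h2, phi_embM] at happ
  simp only [one_mul] at happ
  have h3 : actGen R (Sum.inl ((2 : Fin 3), false)) ((piR R w, (Sum.inr ab, m') :: L) : St R)
      = (1, (Sum.inl 0, piR R w) :: (Sum.inr ab, m') :: L) := by
    simp [actGen, actRb, hw]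
  rw [h3] at happ
  have hinv : StInv R ((1 : Mq R), (Sum.inl 0, piR R w) :: (Sum.inr ab, m') :: L) :=
    ⟨(Sum.inl 0, piR R w), List.mem_cons_self, trivial⟩
  have := inv_word R (embRX g) hinv
  rw [happ] at this
  obtain ⟨e, he, -⟩ := this
  simp at he

end Proof

/-- In `𝔹_p ∗ 𝔹_q ∗ 𝔹_r ∗ M`, if `u, v` are words over the
generators of `M` with `[uv] = 1` and `[u] ≠ 1`, then for all words `f, g` over
`{r, r̄} ∪ X`, the elements `[f r v r̄ g]` and `[f r u r̄ g]` are not `1`. -/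
theorem conjugates_nontrivial (R : FreeMonoid X → FreeMonoid X → Prop)
    (u v : FreeMonoid X)
    (huv : conGen (prodRel R) (embM u * embM v) 1)
    (hu : ¬ conGen (prodRel R) (embM u) 1)
    (f g : FreeMonoid (Bool ⊕ X)) :
    ¬ conGen (prodRel R)
        (embRX f * of (Sum.inl ((2 : Fin 3), true)) * embM v *
          of (Sum.inl ((2 : Fin 3), false)) * embRX g) 1 ∧
    ¬ conGen (prodRel R)
        (embRX f * of (Sum.inl ((2 : Fin 3), true)) * embM u *
          of (Sum.inl ((2 : Fin 3), false)) * embRX g) 1 := by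
  have hpiu : piR R u ≠ 1 := by
    intro h1
    apply hu
    have h2 : Con.ker ((conGen R).mk') u 1 := by
      rw [Con.ker_rel]
      simpa [piR] using h1
    rw [Con.mk'_ker] at h2
    have h3 : (Con.comap embM (map_mul embM) (conGen (prodRel R))) u 1 := by
      refine Con.conGen_le.mpr ?_ h2
      intro x y hxy
      rw [Con.comap_rel]
      exact ConGen.Rel.of _ _ (Or.inr ⟨x, y, hxy, rfl, rfl⟩)
    rw [Con.comap_rel] at h3
    simpa using h3
  have hpiv : piR R v ≠ 1 := by
    intro h1
    apply hu
    have h2 : Con.ker ((conGen R).mk') v 1 := by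
      rw [Con.ker_rel]
      simpa [piR] using h1
    rw [Con.mk'_ker] at h2
    have h3 : (Con.comap embM (map_mul embM) (conGen (prodRel R))) v 1 := by
      refine Con.conGen_le.mpr ?_ h2
      intro x y hxy
      rw [Con.comap_rel]
      exact ConGen.Rel.of _ _ (Or.inr ⟨x, y, hxy, rfl, rfl⟩)
    rw [Con.comap_rel] at h3
    have hv1 : conGen (prodRel R) (embM v) 1 := by simpa using h3
    have h4 : conGen (prodRel R) (embM u * embM v) (embM u * 1) :=
      (conGen (prodRel R)).mul ((conGen (prodRel R)).refl _) hv1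
    have h5 : conGen (prodRel R) (embM u) 1 := by
      rw [mul_one] at h4
      exact (conGen (prodRel R)).trans ((conGen (prodRel R)).symm h4) huv
    exact h5
  exact ⟨key R v hpiv f g, key R u hpiu f g⟩
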